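/- Let (T,d) be a compact metric space, m a Borel probability measure on T, φ a Young function with φ(1)=1, and R > 5. Fix s,t ∈ T with τ_{m,φ}(s,t) < ∞ and an integer l > c, and set A := 4R³/((R−1)(R−2)(R−5)) + 3R²/(2(R−5)). Then: d_τ(s,t) R^τ + Σ_{x∈{s,t}} Σ_{k=τ}^{l-1} r^l_k(x) R^k ≤ A · τ_{m,φ}(s,t). -/

import Mathlib

set_option linter.unusedSectionVars false
set_option maxHeartbeats 2000000


open MeasureTheory ENNReal Filter

noncomputable section

/-- A (finite) Young function: an increasing convex function `φ : [0,∞) → [0,∞)`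
with `φ 0 = 0` and `φ x → ∞` as `x → ∞`. -/
def IsYoungFunction (φ : ℝ → ℝ) : Prop :=
  MonotoneOn φ (Set.Ici 0) ∧ ConvexOn ℝ (Set.Ici 0) φ ∧ φ 0 = 0 ∧
    Tendsto φ atTop atTop

/-- Generalized inverse of a Young function, as a map `ℝ≥0∞ → ℝ≥0∞`
(so that in particular `φ⁻¹(∞) = ∞`). -/
def yinv (φ : ℝ → ℝ) (y : ℝ≥0∞) : ℝ≥0∞ :=
  sInf {x : ℝ≥0∞ | ∃ r : ℝ, 0 ≤ r ∧ x = ENNReal.ofReal r ∧ y ≤ ENNReal.ofReal (φ r)}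

/-- The minorizing metric
`τ_{m,φ}(s,t) = max_{x ∈ {s,t}} ∫_0^{d(s,t)} φ⁻¹(1 / m(B(x,ε))) dε`,
with the conventions `1/0 = ∞`, `φ⁻¹(∞) = ∞`. -/
def tauDist {T : Type*} [MetricSpace T] [MeasurableSpace T]
    (m : Measure T) (φ : ℝ → ℝ) (s t : T) : ℝ≥0∞ :=
  max (∫⁻ ε in Set.Ioc (0 : ℝ) (dist s t), yinv φ (1 / m (Metric.closedBall s ε)))
    (∫⁻ ε in Set.Ioc (0 : ℝ) (dist s t), yinv φ (1 / m (Metric.closedBall t ε)))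

/-- `f^d(u,v) = |f(u) - f(v)| / d(u,v)`, equal to `0` on the diagonal. -/
def fdiv {T : Type*} [MetricSpace T] (f : T → ℝ) (p : T × T) : ℝ :=
  |f p.1 - f p.2| / dist p.1 p.2

/-- The Luxemburg norm `|g|^ν_χ = inf {a > 0 : ∫ χ(|g|/a) dν ≤ 1}`, with value `∞`
if no such `a` exists. -/
def luxNorm {X : Type*} [MeasurableSpace X] (ν : Measure X) (χ : ℝ → ℝ)
    (g : X → ℝ) : ℝ≥0∞ :=
  sInf {a : ℝ≥0∞ | ∃ b : ℝ, 0 < b ∧ a = ENNReal.ofReal b ∧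
    ∫⁻ u, ENNReal.ofReal (χ (|g u| / b)) ∂ν ≤ 1}

/-- The Amemiya norm `‖g‖^μ_χ = inf_{a>0} a (1 + ∫ χ(|g|/a) dμ)`. -/
def amemiyaNorm {X : Type*} [MeasurableSpace X] (μ : Measure X) (χ : ℝ → ℝ)
    (g : X → ℝ) : ℝ≥0∞ :=
  sInf {c : ℝ≥0∞ | ∃ a : ℝ, 0 < a ∧
    c = ENNReal.ofReal a * (1 + ∫⁻ u, ENNReal.ofReal (χ (|g u| / a)) ∂μ)}

/-- `r_0(x) = D(T)` and, for `k ≥ 1`,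
`r_k(x) = min {ε ≥ 0 : 1 / m(B(x,ε)) ≤ φ(R^k)}` (with `1/0 = ∞`). -/
def rad {T : Type*} [MetricSpace T] [MeasurableSpace T]
    (m : Measure T) (φ : ℝ → ℝ) (R : ℝ) : ℕ → T → ℝ
  | 0, _ => Metric.diam (Set.univ : Set T)
  | k + 1, x => sInf {ε : ℝ | 0 ≤ ε ∧
      1 / m (Metric.closedBall x ε) ≤ ENNReal.ofReal (φ (R ^ (k + 1)))}

/-- `r^l_k(x) = ∑_{i=k}^{l} 2^(i-k) r_i(x)`. -/
def radl {T : Type*} [MetricSpace T] [MeasurableSpace T]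
    (m : Measure T) (φ : ℝ → ℝ) (R : ℝ) (k l : ℕ) (x : T) : ℝ :=
  ∑ i ∈ Finset.Icc k l, (2 : ℝ) ^ (i - k) * rad m φ R i x

/-- The averaging operator `S_k f (x) = (1 / m(B_k(x))) ∫_{B_k(x)} f dm`,
with the convention `0/0 = 0`. -/
def avg {T : Type*} [MetricSpace T] [MeasurableSpace T]
    (m : Measure T) (φ : ℝ → ℝ) (R : ℝ) (k : ℕ) (f : T → ℝ) (x : T) : ℝ :=
  (∫ u in Metric.closedBall x (rad m φ R k x), f u ∂m) /
    (m (Metric.closedBall x (rad m φ R k x))).toReal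

/-- The iterated averaging operator `iterAvg k l f = S_l S_{l-1} ⋯ S_k f` (for `k ≤ l`). -/
def iterAvg {T : Type*} [MetricSpace T] [MeasurableSpace T]
    (m : Measure T) (φ : ℝ → ℝ) (R : ℝ) (k : ℕ) : ℕ → (T → ℝ) → T → ℝ
  | 0, f => avg m φ R 0 f
  | l + 1, f =>
      if l + 1 ≤ k then avg m φ R (l + 1) f
      else avg m φ R (l + 1) (iterAvg m φ R k l f)

/-- The set `{k ≥ 1 : B^l_k(s) ∪ B^l_k(t) ⊆ B°(u, r_{k-1}(u)) for every u ∈ B^l_k(x)}`,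
whose greatest element is `τ_x`. -/
def tauSet {T : Type*} [MetricSpace T] [MeasurableSpace T]
    (m : Measure T) (φ : ℝ → ℝ) (R : ℝ) (l : ℕ) (s t x : T) : Set ℕ :=
  {k : ℕ | 1 ≤ k ∧ ∀ u ∈ Metric.closedBall x (radl m φ R k l x),
    Metric.closedBall s (radl m φ R k l s) ∪ Metric.closedBall t (radl m φ R k l t) ⊆
      Metric.ball u (rad m φ R (k - 1) u)}

section Basics
variable {T : Type*} [MetricSpace T] [CompactSpace T] [MeasurableSpace T] [BorelSpace T]
  {m : Measure T} [IsProbabilityMeasure m] {φ : ℝ → ℝ} {R : ℝ}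

-- L5a-type: if `1 ≤ y` then `1 ≤ yinv φ y`
theorem yinv_ge_one (hφ : IsYoungFunction φ) (hφ1 : φ 1 = 1) {y : ℝ≥0∞} (hy : 1 ≤ y) :
    1 ≤ yinv φ y := by
  refine le_sInf ?_
  rintro z ⟨r, hr0, rfl, hyr⟩
  have h1 : (1:ℝ≥0∞) ≤ ENNReal.ofReal (φ r) := le_trans hy hyr
  rw [ENNReal.one_le_ofReal] at h1
  have hr1 : 1 ≤ r := by
    by_contra hlt
    push_neg at hlt
    have h2 := hφ.2.1.2 (Set.mem_Ici.2 (le_refl (0:ℝ))) (Set.mem_Ici.2 (zero_le_one))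
      (by linarith : (0:ℝ) ≤ 1 - r) hr0 (by ring)
    simp only [smul_eq_mul, mul_zero, mul_one, zero_add] at h2
    rw [hφ.2.2.1, hφ1] at h2
    linarith
  simpa using ENNReal.one_le_ofReal.2 hr1

-- L5-type
theorem yinv_ge (hφ : IsYoungFunction φ) {a : ℝ} (ha : 0 ≤ a) {y : ℝ≥0∞}
    (hy : ENNReal.ofReal (φ a) < y) : ENNReal.ofReal a ≤ yinv φ y := by
  refine le_sInf ?_
  rintro z ⟨r, hr0, rfl, hyr⟩
  have hlt : ENNReal.ofReal (φ a) < ENNReal.ofReal (φ r) := lt_of_lt_of_le hy hyr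
  have hφar : φ a < φ r := by
    by_contra hle
    push_neg at hle
    exact absurd (ENNReal.ofReal_le_ofReal hle) (not_le.2 hlt)
  have : a ≤ r := by
    by_contra hlt2
    push_neg at hlt2
    exact absurd (hφ.1 (Set.mem_Ici.2 hr0) (Set.mem_Ici.2 ha) hlt2.le) (not_le.2 hφar)
  exact ENNReal.ofReal_le_ofReal this

end Basics


section RadFacts
variable {T : Type*} [MetricSpace T] [CompactSpace T] [MeasurableSpace T] [BorelSpace T]
  {m : Measure T} [IsProbabilityMeasure m] {φ : ℝ → ℝ} {R : ℝ}

def radSet (m : Measure T) (φ : ℝ → ℝ) (c : ℝ) (x : T) : Set ℝ :=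
  {ε : ℝ | 0 ≤ ε ∧ 1 / m (Metric.closedBall x ε) ≤ ENNReal.ofReal (φ c)}

theorem rad_succ (k : ℕ) (x : T) : rad m φ R (k+1) x = sInf (radSet m φ (R^(k+1)) x) := rfl

theorem enn_one_div_le {a c : ℝ≥0∞} : 1 / a ≤ c ↔ 1 / c ≤ a := by
  rw [one_div, one_div, ENNReal.inv_le_iff_inv_le]

theorem diam_mem_radSet (hmono : MonotoneOn φ (Set.Ici 0)) (hφ1 : φ 1 = 1)
    {c : ℝ} (hc : 1 ≤ c) (x : T) : Metric.diam (Set.univ : Set T) ∈ radSet m φ c x := by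
  constructor
  · exact Metric.diam_nonneg
  · have huniv : (Set.univ : Set T) ⊆ Metric.closedBall x (Metric.diam (Set.univ : Set T)) := by
      intro y _
      exact Metric.dist_le_diam_of_mem (isCompact_univ.isBounded) (Set.mem_univ y) (Set.mem_univ x)
    have h1 : m (Metric.closedBall x (Metric.diam (Set.univ : Set T))) = 1 := by
      refine le_antisymm prob_le_one ?_
      calc (1:ℝ≥0∞) = m Set.univ := (measure_univ).symm
        _ ≤ _ := measure_mono huniv
    rw [h1, div_one, ENNReal.one_le_ofReal]
    calc (1:ℝ) = φ 1 := hφ1.symm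
      _ ≤ φ c := hmono (Set.mem_Ici.2 zero_le_one) (Set.mem_Ici.2 (by linarith)) hc

theorem radSet_bddBelow {c : ℝ} (x : T) : BddBelow (radSet m φ c x) :=
  ⟨0, fun _ h => h.1⟩

theorem rad_nonneg (k : ℕ) (x : T) : 0 ≤ rad m φ R k x := by
  cases k with
  | zero => exact Metric.diam_nonneg
  | succ k =>
    rw [rad_succ]
    rcases Set.eq_empty_or_nonempty (radSet m φ (R^(k+1)) x) with h | h
    · simp [h, Real.sInf_empty]
    · exact le_csInf h (fun b hb => hb.1)

theorem rad_le_diam (hmono : MonotoneOn φ (Set.Ici 0)) (hφ1 : φ 1 = 1) (hR : 1 ≤ R)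
    (k : ℕ) (x : T) : rad m φ R k x ≤ Metric.diam (Set.univ : Set T) := by
  cases k with
  | zero => exact le_refl _
  | succ k =>
    rw [rad_succ]
    exact csInf_le (radSet_bddBelow x) (diam_mem_radSet hmono hφ1 (one_le_pow₀ hR) x)

-- K1 : the infimum is attained
theorem rad_mem (hmono : MonotoneOn φ (Set.Ici 0)) (hφ1 : φ 1 = 1) (hR : 1 ≤ R)
    (k : ℕ) (x : T) :
    1 / m (Metric.closedBall x (rad m φ R (k+1) x)) ≤ ENNReal.ofReal (φ (R ^ (k+1))) := by
  set c := ENNReal.ofReal (φ (R ^ (k+1))) with hcdef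
  set S := radSet m φ (R^(k+1)) x with hS
  have hne : S.Nonempty := ⟨_, diam_mem_radSet hmono hφ1 (one_le_pow₀ hR) x⟩
  set r := rad m φ R (k+1) x with hr
  have hrS : r = sInf S := rad_succ k x
  rw [enn_one_div_le]
  -- show 1/c ≤ m (closedBall x r)
  have hmem : ∀ n : ℕ, 1/c ≤ m (Metric.closedBall x (r + 1/(n+1))) := by
    intro n
    obtain ⟨a, haS, halt⟩ := Real.lt_sInf_add_pos hne
      (by positivity : (0:ℝ) < 1/(n+1))
    have h1 : 1/c ≤ m (Metric.closedBall x a) := enn_one_div_le.1 haS.2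
    refine le_trans h1 (measure_mono (Metric.closedBall_subset_closedBall ?_))
    rw [hrS]; linarith
  have hInter : Metric.closedBall x r = ⋂ n : ℕ, Metric.closedBall x (r + 1/(n+1)) := by
    ext y
    simp only [Metric.mem_closedBall, Set.mem_iInter]
    constructor
    · intro h n; have : (0:ℝ) < 1/(n+1) := by positivity
      linarith
    · intro h
      by_contra hlt
      push_neg at hlt
      obtain ⟨n, hn⟩ := exists_nat_one_div_lt (by linarith : (0:ℝ) < dist y x - r)
      have := h n
      linarith
  have htend := MeasureTheory.tendsto_measure_iInter_atTop
    (μ := m) (s := fun n : ℕ => Metric.closedBall x (r + 1/(n+1)))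
    (fun n => (Metric.isClosed_closedBall.measurableSet).nullMeasurableSet)
    (fun i j hij => Metric.closedBall_subset_closedBall (by
      have : (1:ℝ)/(j+1) ≤ 1/(i+1) := by
        apply one_div_le_one_div_of_le (by positivity)
        exact_mod_cast by omega
      linarith))
    ⟨0, measure_ne_top m _⟩
  rw [hInter]
  exact ge_of_tendsto' htend hmem

end RadFacts

section RadFacts2
variable {T : Type*} [MetricSpace T] [CompactSpace T] [MeasurableSpace T] [BorelSpace T]
  {m : Measure T} [IsProbabilityMeasure m] {φ : ℝ → ℝ} {R : ℝ}

theorem rad_antitone (hmono : MonotoneOn φ (Set.Ici 0)) (hφ1 : φ 1 = 1) (hR : 1 ≤ R)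
    {k k' : ℕ} (hkk : k ≤ k') (x : T) : rad m φ R k' x ≤ rad m φ R k x := by
  cases k with
  | zero => exact rad_le_diam hmono hφ1 hR k' x
  | succ k =>
    cases k' with
    | zero => omega
    | succ k' =>
      rw [rad_succ, rad_succ]
      apply csInf_le_csInf (radSet_bddBelow x)
        ⟨_, diam_mem_radSet hmono hφ1 (one_le_pow₀ hR) x⟩
      intro e he
      refine ⟨he.1, le_trans he.2 (ENNReal.ofReal_le_ofReal ?_)⟩
      have h0 : (0:ℝ) ≤ R ^ (k+1) := by positivity
      exact hmono (Set.mem_Ici.2 h0) (Set.mem_Ici.2 (by positivity))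
        (pow_le_pow_right₀ hR (by omega))

theorem rad_lip (hmono : MonotoneOn φ (Set.Ici 0)) (hφ1 : φ 1 = 1) (hR : 1 ≤ R)
    (k : ℕ) (u y : T) : rad m φ R k y ≤ rad m φ R k u + dist u y := by
  cases k with
  | zero => simp [rad, dist_nonneg]
  | succ k =>
    conv_lhs => rw [rad_succ]
    apply csInf_le (radSet_bddBelow y)
    constructor
    · have h0 : (0:ℝ) ≤ rad m φ R (k+1) u := rad_nonneg _ _
      have h1 : (0:ℝ) ≤ dist u y := dist_nonneg
      linarith
    · have hk1 := rad_mem (m := m) (R := R) (x := u) hmono hφ1 hR (k := k)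
      refine le_trans ?_ hk1
      rw [one_div, one_div]
      apply ENNReal.inv_le_inv'
      apply measure_mono
      intro w hw
      simp only [Metric.mem_closedBall] at hw ⊢
      have := dist_triangle w u y
      rw [dist_comm u y] at *
      linarith [dist_triangle w u y]

theorem lt_rad_imp {k : ℕ} {x : T} {e : ℝ} (he : 0 ≤ e) (hlt : e < rad m φ R (k+1) x) :
    ENNReal.ofReal (φ (R^(k+1))) < 1 / m (Metric.closedBall x e) := by
  by_contra hle
  push_neg at hle
  have : e ∈ radSet m φ (R^(k+1)) x := ⟨he, hle⟩
  have := csInf_le (radSet_bddBelow x) this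
  rw [rad_succ] at hlt
  linarith

end RadFacts2


-- GEO1 : (R-2) * Σ_{k=q}^{j} 2^{j-k} R^k ≤ R^{j+1}
theorem geo1 {R : ℝ} (hR : 2 < R) (q : ℕ) :
    ∀ j, q ≤ j → (R - 2) * ∑ k ∈ Finset.Icc q j, (2:ℝ)^(j-k) * R^k ≤ R^(j+1) := by
  have hR0 : (0:ℝ) < R := by linarith
  intro j hqj
  induction j, hqj using Nat.le_induction with
  | base =>
    simp only [Finset.Icc_self, Finset.sum_singleton, Nat.sub_self, pow_zero, one_mul]
    rw [pow_succ]
    nlinarith [pow_pos hR0 q]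
  | succ j hqj ih =>
    have ih := ih
    have step : ∑ k ∈ Finset.Icc q (j+1), (2:ℝ)^(j+1-k) * R^k
        = (∑ k ∈ Finset.Icc q j, (2:ℝ)^(j+1-k) * R^k) + (2:ℝ)^(j+1-(j+1)) * R^(j+1) :=
      Finset.sum_Icc_succ_top (by omega) _
    have inner : ∑ k ∈ Finset.Icc q j, (2:ℝ)^(j+1-k) * R^k
        = 2 * ∑ k ∈ Finset.Icc q j, (2:ℝ)^(j-k) * R^k := by
      rw [Finset.mul_sum]
      apply Finset.sum_congr rfl
      intro k hk
      simp only [Finset.mem_Icc] at hk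
      have : j + 1 - k = (j - k) + 1 := by omega
      rw [this, pow_succ]; ring
    rw [step, inner]
    simp only [Nat.sub_self, pow_zero, one_mul]
    have hp : (0:ℝ) < R^(j+1) := pow_pos hR0 _
    calc (R-2) * (2 * ∑ k ∈ Finset.Icc q j, (2:ℝ)^(j-k) * R^k + R^(j+1))
        = 2 * ((R-2) * ∑ k ∈ Finset.Icc q j, (2:ℝ)^(j-k) * R^k) + (R-2) * R^(j+1) := by ring
      _ ≤ 2 * R^(j+1) + (R-2) * R^(j+1) := by linarith
      _ = R^(j+2) := by ring
-- GEO2 : (R-2) * Σ_{i∈Ico q j} 2^{j-i-1} R^i ≤ R^j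
theorem geo2 {R : ℝ} (hR : 2 < R) (q : ℕ) :
    ∀ j, (R - 2) * ∑ i ∈ Finset.Ico q j, (2:ℝ)^(j-i-1) * R^i ≤ R^j := by
  have hR0 : (0:ℝ) < R := by linarith
  intro j
  induction j with
  | zero =>
    rw [Finset.Ico_eq_empty (by omega)]
    simp only [Finset.sum_empty, mul_zero, pow_zero]
    linarith
  | succ j ih =>
    rcases Nat.lt_or_ge j q with h | h
    · rw [Finset.Ico_eq_empty (by omega)]
      simp only [Finset.sum_empty, mul_zero]
      positivity
    · have step : ∑ i ∈ Finset.Ico q (j+1), (2:ℝ)^(j+1-i-1) * R^i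
          = (∑ i ∈ Finset.Ico q j, (2:ℝ)^(j-i-1+1) * R^i) + (2:ℝ)^(j-j) * R^j := by
        rw [Finset.sum_Ico_succ_top (by omega)]
        congr 1
        · apply Finset.sum_congr rfl
          intro k hk
          simp only [Finset.mem_Ico] at hk
          congr 2
          omega
        · congr 2
          omega
      rw [step]
      have inner : ∑ i ∈ Finset.Ico q j, (2:ℝ)^(j-i-1+1) * R^i
          = 2 * ∑ i ∈ Finset.Ico q j, (2:ℝ)^(j-i-1) * R^i := by
        rw [Finset.mul_sum]
        apply Finset.sum_congr rfl
        intro k hk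
        rw [pow_succ]; ring
      rw [inner]
      simp only [Nat.sub_self, pow_zero, one_mul]
      have hp : (0:ℝ) < R^j := pow_pos hR0 _
      calc (R-2) * (2 * ∑ i ∈ Finset.Ico q j, (2:ℝ)^(j-i-1) * R^i + R^j)
          = 2 * ((R-2) * ∑ i ∈ Finset.Ico q j, (2:ℝ)^(j-i-1) * R^i) + (R-2) * R^j := by ring
        _ ≤ 2 * R^j + (R-2) * R^j := by linarith
        _ = R^(j+1) := by ring
-- GEO3 : (R-1) * Σ_{i∈Ico q b} R^i ≤ R^b
theorem geo3 {R : ℝ} (hR : 1 < R) (q : ℕ) :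
    ∀ b, (R - 1) * ∑ i ∈ Finset.Ico q b, R^i ≤ R^b := by
  have hR0 : (0:ℝ) < R := by linarith
  intro b
  induction b with
  | zero =>
    rw [Finset.Ico_eq_empty (by omega)]
    simp only [Finset.sum_empty, mul_zero, pow_zero]
    linarith
  | succ b ih =>
    rcases Nat.lt_or_ge b q with h | h
    · rw [Finset.Ico_eq_empty (by omega)]
      simp only [Finset.sum_empty, mul_zero]
      positivity
    · rw [Finset.sum_Ico_succ_top h]
      have hp : (0:ℝ) < R^b := pow_pos hR0 _
      calc (R-1) * (∑ i ∈ Finset.Ico q b, R^i + R^b)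
          = (R-1) * ∑ i ∈ Finset.Ico q b, R^i + (R-1) * R^b := by ring
        _ ≤ R^b + (R-1) * R^b := by linarith
        _ = R^(b+1) := by ring


section IntLemmas
variable {T : Type*} [MetricSpace T] [CompactSpace T] [MeasurableSpace T] [BorelSpace T]
  {m : Measure T} [IsProbabilityMeasure m] {φ : ℝ → ℝ} {R : ℝ}

theorem yb_lb (hφ : IsYoungFunction φ) (hR1 : 1 ≤ R) {k : ℕ} (hk : 1 ≤ k) {x : T} {e : ℝ}
    (h0 : 0 < e) (hlt : e < rad m φ R k x) :
    ENNReal.ofReal (R^k) ≤ yinv φ (1 / m (Metric.closedBall x e)) := by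
  obtain ⟨j, rfl⟩ : ∃ j, k = j + 1 := ⟨k - 1, by omega⟩
  exact yinv_ge hφ (pow_nonneg (by linarith) _) (lt_rad_imp h0.le hlt)

theorem yb_one (hφ : IsYoungFunction φ) (hφ1 : φ 1 = 1) (x : T) (e : ℝ) :
    1 ≤ yinv φ (1 / m (Metric.closedBall x e)) := by
  apply yinv_ge_one hφ hφ1
  rw [one_div]
  calc (1:ℝ≥0∞) = 1⁻¹ := by simp
    _ ≤ (m (Metric.closedBall x e))⁻¹ := ENNReal.inv_le_inv' prob_le_one

theorem lemA (hφ : IsYoungFunction φ) (hφ1 : φ 1 = 1) (hR1 : 1 ≤ R)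
    {k : ℕ} (hk : 1 ≤ k) (x : T) :
    ENNReal.ofReal (rad m φ R k x * R^k)
      ≤ ∫⁻ ε in Set.Ioc (0:ℝ) (rad m φ R k x), yinv φ (1 / m (Metric.closedBall x ε)) := by
  refine le_trans ?_ (lintegral_mono_set Set.Ioo_subset_Ioc_self)
  calc ENNReal.ofReal (rad m φ R k x * R^k)
      = ENNReal.ofReal (R^k) * volume (Set.Ioo (0:ℝ) (rad m φ R k x)) := by
        rw [Real.volume_Ioo, ← ENNReal.ofReal_mul (by positivity)]
        congr 1; ring
    _ = ∫⁻ _ in Set.Ioo (0:ℝ) (rad m φ R k x), ENNReal.ofReal (R^k) :=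
        (setLIntegral_const _ _).symm
    _ ≤ _ := by
        apply setLIntegral_mono' measurableSet_Ioo
        intro e he
        exact yb_lb hφ hR1 hk he.1 he.2

theorem lemSTEP (hφ : IsYoungFunction φ) (hφ1 : φ 1 = 1) (hR1 : 1 ≤ R)
    {k : ℕ} (hk : 1 ≤ k) (x : T) :
    (∫⁻ ε in Set.Ioc (0:ℝ) (rad m φ R (k+1) x), yinv φ (1 / m (Metric.closedBall x ε)))
      + ENNReal.ofReal ((rad m φ R k x - rad m φ R (k+1) x) * R^k)
    ≤ ∫⁻ ε in Set.Ioc (0:ℝ) (rad m φ R k x), yinv φ (1 / m (Metric.closedBall x ε)) := by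
  have hle : rad m φ R (k+1) x ≤ rad m φ R k x := rad_antitone hφ.1 hφ1 hR1 (by omega) x
  have hsplit : Set.Ioc (0:ℝ) (rad m φ R k x)
      = Set.Ioc (0:ℝ) (rad m φ R (k+1) x) ∪ Set.Ioc (rad m φ R (k+1) x) (rad m φ R k x) :=
    (Set.Ioc_union_Ioc_eq_Ioc (rad_nonneg _ _) hle).symm
  rw [hsplit, lintegral_union measurableSet_Ioc
    (by rw [Set.disjoint_left]; intro e h1 h2; exact absurd h2.1 (not_lt.2 h1.2))]
  apply add_le_add_right
  refine le_trans ?_ (lintegral_mono_set Set.Ioo_subset_Ioc_self)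
  calc ENNReal.ofReal ((rad m φ R k x - rad m φ R (k+1) x) * R^k)
      = ENNReal.ofReal (R^k) * volume (Set.Ioo (rad m φ R (k+1) x) (rad m φ R k x)) := by
        rw [Real.volume_Ioo, ← ENNReal.ofReal_mul (by positivity)]
        congr 1; ring
    _ = ∫⁻ _ in Set.Ioo (rad m φ R (k+1) x) (rad m φ R k x), ENNReal.ofReal (R^k) :=
        (setLIntegral_const _ _).symm
    _ ≤ _ := by
        apply setLIntegral_mono' measurableSet_Ioo
        intro e he
        have h0 : 0 < e := lt_of_le_of_lt (rad_nonneg _ _) he.1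
        exact yb_lb hφ hR1 hk h0 he.2

theorem lemCHAIN (hφ : IsYoungFunction φ) (hφ1 : φ 1 = 1) (hR1 : 1 ≤ R) (x : T) :
    ∀ (n : ℕ) {k : ℕ}, 1 ≤ k →
    ENNReal.ofReal ((∑ i ∈ Finset.Icc k (k+n),
        (rad m φ R i x - rad m φ R (i+1) x) * R^i) + rad m φ R (k+n+1) x * R^(k+n+1))
      ≤ ∫⁻ ε in Set.Ioc (0:ℝ) (rad m φ R k x), yinv φ (1 / m (Metric.closedBall x ε)) := by
  intro n
  induction n with
  | zero =>
    intro k hk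
    simp only [Nat.add_zero, Finset.Icc_self, Finset.sum_singleton]
    refine le_trans (ENNReal.ofReal_add_le) ?_
    refine le_trans ?_ (lemSTEP hφ hφ1 hR1 hk x)
    rw [add_comm]
    exact add_le_add_left (lemA hφ hφ1 hR1 (k := k+1) (Nat.le_add_left 1 k) x) _
  | succ n ih =>
    intro k hk
    have hins : Finset.Icc k (k+(n+1)) = insert k (Finset.Icc (k+1) ((k+1)+n)) := by
      ext i
      simp only [Finset.mem_Icc, Finset.mem_insert]
      omega
    rw [hins, Finset.sum_insert (by simp [Finset.mem_Icc])]
    rw [add_assoc]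
    refine le_trans (ENNReal.ofReal_add_le) ?_
    refine le_trans ?_ (lemSTEP hφ hφ1 hR1 hk x)
    rw [add_comm]
    have h2 := ih (k := k+1) (by omega)
    rw [show (k+1)+n+1 = k+(n+1)+1 by omega] at h2
    exact add_le_add_left h2 _
end IntLemmas


section AlgLemmas

theorem lemALG {R : ℝ} (hR : 1 < R) (r : ℕ → ℝ) (hr : ∀ i, 0 ≤ r i) (k : ℕ) :
    ∀ n, (1 - 1/R) * ∑ i ∈ Finset.Icc k (k+n+1), r i * R^i
      ≤ (∑ i ∈ Finset.Icc k (k+n), (r i - r (i+1)) * R^i) + r (k+n+1) * R^(k+n+1) := by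
  have hR0 : (0:ℝ) < R := by linarith
  intro n
  induction n with
  | zero =>
    simp only [Nat.add_zero]
    rw [Finset.sum_Icc_succ_top (Nat.le_succ k)]
    simp only [Finset.Icc_self, Finset.sum_singleton]
    have key : ((r k - r (k+1)) * R^k + r (k+1) * R^(k+1))
        - (1 - 1/R) * (r k * R^k + r (k+1) * R^(k+1)) = r k * R^k / R := by
      field_simp
      ring
    have hpos : 0 ≤ r k * R^k / R := div_nonneg (mul_nonneg (hr k) (pow_nonneg hR0.le k)) hR0.le
    linarith
  | succ n ih =>
    have e1 : k + (n+1) + 1 = (k + n + 1) + 1 := by omega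
    have e2 : k + (n+1) = (k + n) + 1 := by omega
    rw [e1, e2]
    have hL : ∑ i ∈ Finset.Icc k (k+n+1+1), r i * R^i
        = (∑ i ∈ Finset.Icc k (k+n+1), r i * R^i) + r (k+n+1+1) * R^(k+n+1+1) :=
      Finset.sum_Icc_succ_top (by omega) _
    have hRt : ∑ i ∈ Finset.Icc k (k+n+1), (r i - r (i+1)) * R^i
        = (∑ i ∈ Finset.Icc k (k+n), (r i - r (i+1)) * R^i)
          + (r (k+n+1) - r (k+n+1+1)) * R^(k+n+1) :=
      Finset.sum_Icc_succ_top (by omega) _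
    rw [hL, hRt, mul_add]
    have hdiv : (1 - 1/R) * (r (k+n+1+1) * R^(k+n+1+1))
        = r (k+n+1+1) * R^(k+n+1+1) - r (k+n+1+1) * R^(k+n+1) := by
      rw [pow_succ _ (k+n+1)]
      field_simp
    have hexp : (r (k+n+1) - r (k+n+1+1)) * R^(k+n+1)
        = r (k+n+1) * R^(k+n+1) - r (k+n+1+1) * R^(k+n+1) := by ring
    rw [hdiv, hexp]
    linarith

end AlgLemmas

section IntLemmas2
variable {T : Type*} [MetricSpace T] [CompactSpace T] [MeasurableSpace T] [BorelSpace T]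
  {m : Measure T} [IsProbabilityMeasure m] {φ : ℝ → ℝ} {R : ℝ}

theorem lemI (hφ : IsYoungFunction φ) (hφ1 : φ 1 = 1) (hR1 : 1 < R)
    {k N : ℕ} (hk : 1 ≤ k) (hN : k ≤ N) (x : T) :
    ENNReal.ofReal ((1 - 1/R) * ∑ i ∈ Finset.Icc k N, rad m φ R i x * R^i)
      ≤ ∫⁻ ε in Set.Ioc (0:ℝ) (rad m φ R k x), yinv φ (1 / m (Metric.closedBall x ε)) := by
  have hR0 : (0:ℝ) < R := by linarith
  rcases Nat.eq_or_lt_of_le hN with h | h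
  · subst h
    rw [Finset.Icc_self, Finset.sum_singleton]
    refine le_trans (ENNReal.ofReal_le_ofReal ?_) (lemA hφ hφ1 hR1.le hk x)
    have h1 : 0 ≤ rad m φ R k x * R^k := by
      have := rad_nonneg (m := m) (φ := φ) (R := R) k x
      positivity
    nlinarith [one_div_pos.2 hR0]
  · obtain ⟨n, rfl⟩ : ∃ n, N = k + n + 1 := ⟨N - k - 1, by omega⟩
    refine le_trans (ENNReal.ofReal_le_ofReal (lemALG hR1 (fun i => rad m φ R i x)
      (fun i => rad_nonneg _ _) k n)) ?_
    exact lemCHAIN hφ hφ1 hR1.le x n hk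

end IntLemmas2


section Radl
variable {T : Type*} [MetricSpace T] [CompactSpace T] [MeasurableSpace T] [BorelSpace T]
  {m : Measure T} [IsProbabilityMeasure m] {φ : ℝ → ℝ} {R : ℝ}

theorem radl_nonneg (k l : ℕ) (x : T) : 0 ≤ radl m φ R k l x :=
  Finset.sum_nonneg fun i _ => mul_nonneg (by positivity) (rad_nonneg _ _)

-- τ₀ ≤ i₀ whenever rad i₀ x₀ ≤ dist s t, for x₀ ∈ {s,t}
theorem tau_le (hφ : IsYoungFunction φ) (hφ1 : φ 1 = 1) (hR1 : 1 ≤ R)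
    {s t x₀ w : T} (hst : (x₀ = s ∧ w = t) ∨ (x₀ = t ∧ w = s)) {l τ₀ i₀ : ℕ}
    (hIG : IsGreatest (tauSet m φ R l s t x₀) τ₀)
    (hrad : rad m φ R i₀ x₀ ≤ dist s t) : τ₀ ≤ i₀ := by
  by_contra hlt
  push_neg at hlt
  obtain ⟨h1, hcond⟩ := hIG.1
  have hu : x₀ ∈ Metric.closedBall x₀ (radl m φ R τ₀ l x₀) :=
    Metric.mem_closedBall_self (radl_nonneg _ _ _)
  have hw : w ∈ Metric.closedBall s (radl m φ R τ₀ l s) ∪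
      Metric.closedBall t (radl m φ R τ₀ l t) := by
    rcases hst with ⟨_, rfl⟩ | ⟨_, rfl⟩
    · exact Set.mem_union_right _ (Metric.mem_closedBall_self (radl_nonneg _ _ _))
    · exact Set.mem_union_left _ (Metric.mem_closedBall_self (radl_nonneg _ _ _))
  have hball := hcond x₀ hu hw
  rw [Metric.mem_ball] at hball
  have hdw : dist w x₀ = dist s t := by
    rcases hst with ⟨rfl, rfl⟩ | ⟨rfl, rfl⟩
    · exact dist_comm _ _
    · rfl
  have hanti : rad m φ R (τ₀ - 1) x₀ ≤ rad m φ R i₀ x₀ :=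
    rad_antitone hφ.1 hφ1 hR1 (by omega) x₀
  rw [hdw] at hball
  linarith

end Radl


/-- Lemma 8 of the paper. -/
theorem statement18 (T : Type) [MetricSpace T] [CompactSpace T]
    [MeasurableSpace T] [BorelSpace T]
    (m : Measure T) (hm : IsProbabilityMeasure m)
    (φ : ℝ → ℝ) (hφ : IsYoungFunction φ) (hφ1 : φ 1 = 1)
    (R : ℝ) (hR : 5 < R)
    (s t : T) (hτfin : tauDist m φ s t ≠ ⊤)
    (c : ℕ)
    (hc : (dist s t < Metric.diam (Set.univ : Set T) ∧
            ∃ a b : ℕ, 1 ≤ a ∧ 1 ≤ b ∧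
              rad m φ R a s ≤ dist s t ∧ dist s t < rad m φ R (a - 1) s ∧
              rad m φ R b t ≤ dist s t ∧ dist s t < rad m φ R (b - 1) t ∧
              c = max a b) ∨
          (dist s t = Metric.diam (Set.univ : Set T) ∧ c = 0))
    (l : ℕ) (hl : c < l)
    (τs τt : ℕ)
    (hτs : IsGreatest (tauSet m φ R l s t s) τs)
    (hτt : IsGreatest (tauSet m φ R l s t t) τt) :
    ENNReal.ofReal
        (min (radl m φ R (min τs τt) l s + radl m φ R (min τs τt) l t + dist s t)
            (Metric.diam (Set.univ : Set T)) * R ^ (min τs τt) +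
          (∑ k ∈ Finset.Ico (min τs τt) l, radl m φ R k l s * R ^ k +
            ∑ k ∈ Finset.Ico (min τs τt) l, radl m φ R k l t * R ^ k)) ≤
      ENNReal.ofReal
          (4 * R ^ 3 / ((R - 1) * (R - 2) * (R - 5)) + 3 * R ^ 2 / (2 * (R - 5))) *
        tauDist m φ s t := by
  have hR0 : (0:ℝ) < R := by linarith
  have hR1 : (1:ℝ) < R := by linarith
  have hR2 : (2:ℝ) < R := by linarith
  set d := dist s t with hd
  have hd0 : (0:ℝ) ≤ d := dist_nonneg
  set τ := min τs τt with hτdef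
  set β := max c 1 with hβdef
  have hβ1 : 1 ≤ β := le_max_right _ _
  have hβl : β ≤ l := max_le (by omega) (by omega)
  have hτl : 1 ≤ τ := le_min hτs.1.1 hτt.1.1
  set J := (tauDist m φ s t).toReal with hJdef
  have hJ0 : 0 ≤ J := ENNReal.toReal_nonneg
  set μ : ℕ → ℝ := fun i => max (rad m φ R i s) (rad m φ R i t) with hμdef
  set Mk : ℕ → ℝ := fun k => ∑ i ∈ Finset.Icc k l, (2:ℝ)^(i-k) * μ i with hMkdef
  set F : ℝ := ∑ i ∈ Finset.Ico τ β, μ i * R^i with hFdef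
  set Ex : T → ℝ := fun x => ∑ i ∈ Finset.Icc β l, rad m φ R i x * R^i with hExdef
  set E : ℝ := Ex s + Ex t with hEdef
  have hμ0 : ∀ i, 0 ≤ μ i := fun i => le_trans (rad_nonneg _ _) (le_max_left _ _)
  have hμ_sum : ∀ i, μ i ≤ rad m φ R i s + rad m φ R i t := fun i =>
    max_le (le_add_of_nonneg_right (rad_nonneg _ _)) (le_add_of_nonneg_left (rad_nonneg _ _))
  have hMk0 : ∀ k, 0 ≤ Mk k := fun k =>
    Finset.sum_nonneg fun i _ => mul_nonneg (by positivity) (hμ0 i)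
  have hF0 : 0 ≤ F := Finset.sum_nonneg fun i _ => mul_nonneg (hμ0 i) (by positivity)
  have hEx0 : ∀ x : T, 0 ≤ Ex x := fun x =>
    Finset.sum_nonneg fun i _ => mul_nonneg (rad_nonneg _ _) (by positivity)
  have hradlMk : ∀ (x : T), (x = s ∨ x = t) → ∀ k, radl m φ R k l x ≤ Mk k := by
    intro x hx k
    apply Finset.sum_le_sum
    intro i _
    apply mul_le_mul_of_nonneg_left _ (by positivity)
    rcases hx with rfl | rfl
    · exact le_max_left _ _
    · exact le_max_right _ _
  -- the tauDist is the max of the two integrals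
  have htD : tauDist m φ s t =
      max (∫⁻ ε in Set.Ioc (0:ℝ) d, yinv φ (1 / m (Metric.closedBall s ε)))
        (∫⁻ ε in Set.Ioc (0:ℝ) d, yinv φ (1 / m (Metric.closedBall t ε))) := rfl
  have hIle : ∀ x : T, (x = s ∨ x = t) →
      (∫⁻ ε in Set.Ioc (0:ℝ) d, yinv φ (1 / m (Metric.closedBall x ε))) ≤ tauDist m φ s t := by
    rintro x (rfl | rfl)
    · rw [htD]; exact le_max_left _ _
    · rw [htD]; exact le_max_right _ _
  have hofJ : ∀ u : ℝ, ENNReal.ofReal u ≤ tauDist m φ s t → u ≤ J := by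
    intro u h
    exact (ENNReal.ofReal_le_iff_le_toReal hτfin).1 h
  -- E-budget (generic)
  have hlemIx : ∀ x : T, (x = s ∨ x = t) → rad m φ R β x ≤ d → (1 - 1/R) * Ex x ≤ J := by
    intro x hx hβd
    apply hofJ
    refine le_trans (lemI (m := m) hφ hφ1 hR1 hβ1 hβl x) ?_
    refine le_trans (lintegral_mono_set (Set.Ioc_subset_Ioc_right hβd)) (hIle x hx)
  have hbudget2 : ∀ x : T, (x = s ∨ x = t) → rad m φ R β x ≤ d →
      (R - 1) * Ex x ≤ R * J := by
    intro x hx hβd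
    have h1 := mul_le_mul_of_nonneg_left (hlemIx x hx hβd) hR0.le
    have h2 : R * ((1 - 1/R) * Ex x) = (R - 1) * Ex x := by
      field_simp
    linarith
  -- full budget for the special point
  have hbudget1 : ∀ x : T, (x = s ∨ x = t) → rad m φ R β x ≤ d →
      (∀ e : ℝ, rad m φ R β x < e → e < d →
        ENNReal.ofReal (R^(β-1)) ≤ yinv φ (1 / m (Metric.closedBall x e))) →
      d * R^β + (R - 2) * Ex x ≤ R * J := by
    intro x hx hβd hyb
    have hun : (∫⁻ ε in Set.Ioc (0:ℝ) d, yinv φ (1 / m (Metric.closedBall x ε)))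
        = (∫⁻ ε in Set.Ioc (0:ℝ) (rad m φ R β x), yinv φ (1 / m (Metric.closedBall x ε)))
          + ∫⁻ ε in Set.Ioc (rad m φ R β x) d, yinv φ (1 / m (Metric.closedBall x ε)) := by
      rw [← lintegral_union measurableSet_Ioc
        (by rw [Set.disjoint_left]; intro e h1 h2; exact absurd h2.1 (not_lt.2 h1.2)),
        Set.Ioc_union_Ioc_eq_Ioc (rad_nonneg _ _) hβd]
    have h1 := lemI (m := m) hφ hφ1 hR1 hβ1 hβl x (k := β) (N := l)
    have h2 : ENNReal.ofReal ((d - rad m φ R β x) * R^(β-1))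
        ≤ ∫⁻ ε in Set.Ioc (rad m φ R β x) d, yinv φ (1 / m (Metric.closedBall x ε)) := by
      refine le_trans ?_ (lintegral_mono_set Set.Ioo_subset_Ioc_self)
      calc ENNReal.ofReal ((d - rad m φ R β x) * R^(β-1))
          = ENNReal.ofReal (R^(β-1)) * volume (Set.Ioo (rad m φ R β x) d) := by
            rw [Real.volume_Ioo, ← ENNReal.ofReal_mul (by positivity)]
            congr 1
            ring
        _ = ∫⁻ _ in Set.Ioo (rad m φ R β x) d, ENNReal.ofReal (R^(β-1)) :=
            (setLIntegral_const _ _).symm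
        _ ≤ _ := setLIntegral_mono' measurableSet_Ioo (fun e he => hyb e he.1 he.2)
    have h3 : ENNReal.ofReal ((1 - 1/R) * Ex x + (d - rad m φ R β x) * R^(β-1))
        ≤ tauDist m φ s t := by
      refine le_trans ENNReal.ofReal_add_le ?_
      refine le_trans (add_le_add h1 h2) ?_
      rw [← hun]
      exact hIle x hx
    have h4 := hofJ _ h3
    have hsingle : rad m φ R β x * R^β ≤ Ex x := by
      rw [hExdef]
      exact Finset.single_le_sum (f := fun i => rad m φ R i x * R^i)
        (fun i _ => mul_nonneg (rad_nonneg _ _) (by positivity))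
        (Finset.mem_Icc.2 ⟨le_rfl, hβl⟩)
    have hpow : R^β = R^(β-1) * R := by
      rw [← pow_succ]
      congr 1
      omega
    have h5 := mul_le_mul_of_nonneg_left h4 hR0.le
    have hid : R * ((1 - 1/R) * Ex x + (d - rad m φ R β x) * R^(β-1))
        = (R-1) * Ex x + d * R^β - rad m φ R β x * R^β := by
      rw [hpow]
      field_simp
      ring
    rw [hid] at h5
    linarith
  -- facts depending on the case analysis of hc
  have hcase : (rad m φ R β s ≤ d) ∧ (rad m φ R β t ≤ d) ∧ τ ≤ β ∧
      (∃ E1 E2 : ℝ, E1 + E2 = E ∧ 0 ≤ E1 ∧ 0 ≤ E2 ∧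
        d * R^β + (R - 2) * E1 ≤ R * J ∧ (R - 1) * E2 ≤ R * J) := by
    rcases hc with ⟨hdD, a, b, ha1, hb1, hras, hlta, hrbt, hltb, hcab⟩ | ⟨hdD, hc0⟩
    · have hc1 : 1 ≤ c := by omega
      have hβc : β = c := max_eq_left hc1
      have hac : a ≤ β := by omega
      have hbc : b ≤ β := by omega
      have hβds : rad m φ R β s ≤ d :=
        le_trans (rad_antitone hφ.1 hφ1 hR1.le hac s) hras
      have hβdt : rad m φ R β t ≤ d :=
        le_trans (rad_antitone hφ.1 hφ1 hR1.le hbc t) hrbt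
      refine ⟨hβds, hβdt, ?_, ?_⟩
      · rcases le_total a b with hab | hab
        · have h1 : τt ≤ b := tau_le hφ hφ1 hR1.le (Or.inr ⟨rfl, rfl⟩) hτt hrbt
          have h2 : τ ≤ τt := min_le_right _ _
          omega
        · have h1 : τs ≤ a := tau_le hφ hφ1 hR1.le (Or.inl ⟨rfl, rfl⟩) hτs hras
          have h2 : τ ≤ τs := min_le_left _ _
          omega
      · rcases le_total a b with hab | hab
        · refine ⟨Ex t, Ex s, by rw [hEdef]; ring, hEx0 t, hEx0 s, ?_,
            hbudget2 s (Or.inl rfl) hβds⟩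
          apply hbudget1 t (Or.inr rfl) hβdt
          intro e he1 he2
          rcases Nat.eq_or_lt_of_le hβ1 with hβeq | hβgt
          · have hone : ENNReal.ofReal (R ^ (β - 1)) = 1 := by
              rw [← hβeq]
              norm_num
            rw [hone]
            exact yb_one hφ hφ1 _ _
          · have heq2 : β - 1 = b - 1 := by omega
            rw [heq2]
            exact yb_lb hφ hR1.le (by omega) (lt_of_le_of_lt (rad_nonneg _ _) he1)
              (by linarith)
        · refine ⟨Ex s, Ex t, by rw [hEdef], hEx0 s, hEx0 t, ?_,
            hbudget2 t (Or.inr rfl) hβdt⟩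
          apply hbudget1 s (Or.inl rfl) hβds
          intro e he1 he2
          rcases Nat.eq_or_lt_of_le hβ1 with hβeq | hβgt
          · have hone : ENNReal.ofReal (R ^ (β - 1)) = 1 := by
              rw [← hβeq]
              norm_num
            rw [hone]
            exact yb_one hφ hφ1 _ _
          · have heq2 : β - 1 = a - 1 := by omega
            rw [heq2]
            exact yb_lb hφ hR1.le (by omega) (lt_of_le_of_lt (rad_nonneg _ _) he1)
              (by linarith)
    · have hβ1' : β = 1 := by simp [hβdef, hc0]
      have h1s : rad m φ R 1 s ≤ d := by
        rw [hdD]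
        exact rad_le_diam hφ.1 hφ1 hR1.le 1 s
      have h1t : rad m φ R 1 t ≤ d := by
        rw [hdD]
        exact rad_le_diam hφ.1 hφ1 hR1.le 1 t
      have hβds : rad m φ R β s ≤ d := by rw [hβ1']; exact h1s
      have hβdt : rad m φ R β t ≤ d := by rw [hβ1']; exact h1t
      refine ⟨hβds, hβdt, ?_, ?_⟩
      · have h1 : τs ≤ 1 := tau_le hφ hφ1 hR1.le (Or.inl ⟨rfl, rfl⟩) hτs h1s
        have h2 : τ ≤ τs := min_le_left _ _
        omega
      · refine ⟨Ex s, Ex t, by rw [hEdef], hEx0 s, hEx0 t, ?_,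
          hbudget2 t (Or.inr rfl) hβdt⟩
        apply hbudget1 s (Or.inl rfl) hβds
        intro e he1 he2
        have hone : ENNReal.ofReal (R ^ (β - 1)) = 1 := by
          rw [hβ1']
          norm_num
        rw [hone]
        exact yb_one hφ hφ1 _ _
  obtain ⟨hβds, hβdt, hτβ, E1, E2, hE12, hE10, hE20, hb1, hb2⟩ := hcase
  -- recursion from maximality
  have hpair : ∀ p q : T, (p = s ∨ p = t) → (q = s ∨ q = t) → dist p q ≤ d := by
    rintro p q (rfl|rfl) (rfl|rfl)
    · rw [dist_self]; exact hd0
    · exact le_rfl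
    · exact le_of_eq (dist_comm _ _)
    · rw [dist_self]; exact hd0
  have hrec : ∀ i, τ ≤ i → i < β → μ i ≤ 2*d + 3*(Mk (i+1)) := by
    have hub : ∃ xh : T, (xh = s ∨ xh = t) ∧
        ∀ k, k ∈ tauSet m φ R l s t xh → k ≤ τ := by
      rcases le_total τs τt with hmin | hmin
      · exact ⟨s, Or.inl rfl, fun k hk =>
          (hτs.2 hk).trans (le_of_eq (min_eq_left hmin).symm)⟩
      · exact ⟨t, Or.inr rfl, fun k hk =>
          (hτt.2 hk).trans (le_of_eq (min_eq_right hmin).symm)⟩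
    obtain ⟨xh, hxh, hub⟩ := hub
    intro i hτi hiβ
    have hnot : (i+1) ∉ tauSet m φ R l s t xh := fun hmem => by
      have := hub _ hmem
      omega
    simp only [tauSet, Set.mem_setOf_eq] at hnot
    push_neg at hnot
    obtain ⟨u, hu, hnsub⟩ := hnot (by omega)
    rw [Set.not_subset] at hnsub
    obtain ⟨v, hv, hvn⟩ := hnsub
    rw [Metric.mem_ball] at hvn
    push_neg at hvn
    have hvn' : rad m φ R i u ≤ dist v u := by
      have : i + 1 - 1 = i := by omega
      rwa [this] at hvn
    rw [Metric.mem_closedBall] at hu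
    have hdux : dist u xh ≤ Mk (i+1) := le_trans hu (hradlMk xh hxh (i+1))
    have hvz : ∃ z : T, (z = s ∨ z = t) ∧ dist v z ≤ Mk (i+1) := by
      rcases hv with hv | hv
      · exact ⟨s, Or.inl rfl, le_trans (Metric.mem_closedBall.1 hv) (hradlMk s (Or.inl rfl) _)⟩
      · exact ⟨t, Or.inr rfl, le_trans (Metric.mem_closedBall.1 hv) (hradlMk t (Or.inr rfl) _)⟩
    obtain ⟨z, hz, hvzle⟩ := hvz
    have hdvu : dist v u ≤ 2*Mk (i+1) + d := by
      calc dist v u ≤ dist v z + dist z xh + dist xh u := dist_triangle4 v z xh u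
        _ ≤ Mk (i+1) + d + Mk (i+1) := by
            refine add_le_add (add_le_add hvzle (hpair z xh hz hxh)) ?_
            rw [dist_comm]
            exact hdux
        _ = 2*Mk (i+1) + d := by ring
    have hkey : ∀ y : T, (y = s ∨ y = t) → rad m φ R i y ≤ 2*d + 3*Mk (i+1) := by
      intro y hy
      have h1 : rad m φ R i y ≤ rad m φ R i u + dist u y := rad_lip hφ.1 hφ1 hR1.le i u y
      have h2 : dist u y ≤ dist u xh + dist xh y := dist_triangle _ _ _
      have h3 : dist xh y ≤ d := hpair xh y hxh hy
      linarith
    exact max_le (hkey s (Or.inl rfl)) (hkey t (Or.inr rfl))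
  -- geometric sum estimates
  have hp1 : (0:ℝ) < R - 1 := by linarith
  have hp2 : (0:ℝ) < R - 2 := by linarith
  have hp5 : (0:ℝ) < R - 5 := by linarith
  have hp3 : (0:ℝ) < R + 3 := by linarith
  set S4s := ∑ i ∈ Finset.Ico τ β, (R:ℝ)^i with hS4def
  set S2s := ∑ i ∈ Finset.Ico τ β, Mk (i+1) * R^i with hS2def
  set S1s := ∑ k ∈ Finset.Ico τ l, Mk k * R^k with hS1def
  have hS4 : (R - 1) * S4s ≤ R^β := geo3 hR1 τ β
  have hsplitμ : ∑ i ∈ Finset.Icc τ l, μ i * R^i ≤ F + E := by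
    rw [← Finset.Ico_add_one_right_eq_Icc, ← Finset.sum_Ico_consecutive _ hτβ (by omega : β ≤ l+1)]
    apply add_le_add le_rfl
    rw [Finset.Ico_add_one_right_eq_Icc]
    calc ∑ i ∈ Finset.Icc β l, μ i * R^i
        ≤ ∑ i ∈ Finset.Icc β l, (rad m φ R i s + rad m φ R i t) * R^i :=
          Finset.sum_le_sum fun i _ =>
            mul_le_mul_of_nonneg_right (hμ_sum i) (by positivity)
      _ = E := by
          rw [hEdef, hExdef]
          simp only
          rw [← Finset.sum_add_distrib]
          apply Finset.sum_congr rfl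
          intro i _
          ring
  have hS3 : Mk τ * R^τ ≤ F + E := by
    refine le_trans ?_ hsplitμ
    rw [hMkdef]
    simp only
    rw [Finset.sum_mul]
    apply Finset.sum_le_sum
    intro i hi
    simp only [Finset.mem_Icc] at hi
    have h2R : (2:ℝ)^(i-τ) ≤ R^(i-τ) := by
      apply pow_le_pow_left₀ (by norm_num) (by linarith)
    have hpow : R^(i-τ) * R^τ = R^i := by
      rw [← pow_add]
      congr 1
      omega
    calc (2:ℝ)^(i-τ) * μ i * R^τ ≤ R^(i-τ) * μ i * R^τ := by
          apply mul_le_mul_of_nonneg_right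
            (mul_le_mul_of_nonneg_right h2R (hμ0 i)) (by positivity)
      _ = μ i * R^i := by rw [← hpow]; ring
  have hτle_l : τ ≤ l := le_trans hτβ hβl
  have hS1 : (R - 2) * S1s ≤ R * (F + E) := by
    have hext : S1s ≤ ∑ k ∈ Finset.Ico τ (l+1), Mk k * R^k := by
      rw [hS1def, Finset.sum_Ico_succ_top hτle_l]
      exact le_add_of_nonneg_right (mul_nonneg (hMk0 l) (by positivity))
    have heq : ∑ k ∈ Finset.Ico τ (l+1), Mk k * R^k
        = ∑ i ∈ Finset.Ico τ (l+1), ∑ k ∈ Finset.Ico τ (i+1), μ i * ((2:ℝ)^(i-k) * R^k) := by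
      rw [← Finset.sum_Ico_Ico_comm]
      apply Finset.sum_congr rfl
      intro k _
      rw [hMkdef]
      simp only
      rw [Finset.sum_mul, ← Finset.Ico_add_one_right_eq_Icc]
      apply Finset.sum_congr rfl
      intro i _
      ring
    have hbound : ∀ i ∈ Finset.Ico τ (l+1),
        (R-2) * ∑ k ∈ Finset.Ico τ (i+1), μ i * ((2:ℝ)^(i-k)*R^k) ≤ μ i * R^i * R := by
      intro i hi
      simp only [Finset.mem_Ico] at hi
      have hgeo := geo1 hR2 τ i hi.1
      rw [← Finset.mul_sum, Finset.Ico_add_one_right_eq_Icc]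
      calc (R-2) * (μ i * ∑ k ∈ Finset.Icc τ i, (2:ℝ)^(i-k)*R^k)
          = μ i * ((R-2) * ∑ k ∈ Finset.Icc τ i, (2:ℝ)^(i-k)*R^k) := by ring
        _ ≤ μ i * R^(i+1) := mul_le_mul_of_nonneg_left hgeo (hμ0 i)
        _ = μ i * R^i * R := by rw [pow_succ]; ring
    calc (R-2) * S1s ≤ (R-2) * ∑ k ∈ Finset.Ico τ (l+1), Mk k * R^k :=
          mul_le_mul_of_nonneg_left hext hp2.le
      _ = ∑ i ∈ Finset.Ico τ (l+1), (R-2) * ∑ k ∈ Finset.Ico τ (i+1), μ i * ((2:ℝ)^(i-k)*R^k) := by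
          rw [heq, Finset.mul_sum]
      _ ≤ ∑ i ∈ Finset.Ico τ (l+1), μ i * R^i * R := Finset.sum_le_sum hbound
      _ = R * ∑ i ∈ Finset.Ico τ (l+1), μ i * R^i := by
          rw [← Finset.sum_mul, mul_comm]
      _ = R * ∑ i ∈ Finset.Icc τ l, μ i * R^i := by rw [Finset.Ico_add_one_right_eq_Icc]
      _ ≤ R * (F + E) := mul_le_mul_of_nonneg_left hsplitμ hR0.le
  have hS2 : (R - 2) * S2s ≤ F + E := by
    have hext : S2s ≤ ∑ i ∈ Finset.Ico τ (l+1), Mk (i+1) * R^i := by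
      rw [hS2def]
      apply Finset.sum_le_sum_of_subset_of_nonneg
        (Finset.Ico_subset_Ico le_rfl (by omega))
      intro i _ _
      exact mul_nonneg (hMk0 _) (by positivity)
    have heq : ∑ i ∈ Finset.Ico τ (l+1), Mk (i+1) * R^i
        = ∑ j ∈ Finset.Ico τ (l+1), ∑ i ∈ Finset.Ico τ j, μ j * ((2:ℝ)^(j-i-1) * R^i) := by
      rw [← Finset.sum_Ico_Ico_comm']
      apply Finset.sum_congr rfl
      intro i hi
      rw [hMkdef]
      simp only
      rw [Finset.sum_mul, ← Finset.Ico_add_one_right_eq_Icc]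
      apply Finset.sum_congr rfl
      intro j hj
      simp only [Finset.mem_Ico] at hj
      have : j - (i+1) = j - i - 1 := by omega
      rw [this]
      ring
    have hbound : ∀ j ∈ Finset.Ico τ (l+1),
        (R-2) * ∑ i ∈ Finset.Ico τ j, μ j * ((2:ℝ)^(j-i-1)*R^i) ≤ μ j * R^j := by
      intro j _
      have hgeo := geo2 hR2 τ j
      rw [← Finset.mul_sum]
      calc (R-2) * (μ j * ∑ i ∈ Finset.Ico τ j, (2:ℝ)^(j-i-1)*R^i)
          = μ j * ((R-2) * ∑ i ∈ Finset.Ico τ j, (2:ℝ)^(j-i-1)*R^i) := by ring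
        _ ≤ μ j * R^j := mul_le_mul_of_nonneg_left hgeo (hμ0 j)
    calc (R-2) * S2s ≤ (R-2) * ∑ i ∈ Finset.Ico τ (l+1), Mk (i+1) * R^i :=
          mul_le_mul_of_nonneg_left hext hp2.le
      _ = ∑ j ∈ Finset.Ico τ (l+1), (R-2) * ∑ i ∈ Finset.Ico τ j, μ j * ((2:ℝ)^(j-i-1)*R^i) := by
          rw [heq, Finset.mul_sum]
      _ ≤ ∑ j ∈ Finset.Ico τ (l+1), μ j * R^j := Finset.sum_le_sum hbound
      _ = ∑ j ∈ Finset.Icc τ l, μ j * R^j := by rw [Finset.Ico_add_one_right_eq_Icc]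
      _ ≤ F + E := hsplitμ
  have hFrec : F ≤ 2*d*S4s + 3*S2s := by
    rw [hFdef]
    calc ∑ i ∈ Finset.Ico τ β, μ i * R^i
        ≤ ∑ i ∈ Finset.Ico τ β, (2*d*R^i + 3*(Mk (i+1) * R^i)) := by
          apply Finset.sum_le_sum
          intro i hi
          simp only [Finset.mem_Ico] at hi
          have h := hrec i hi.1 hi.2
          have hRp : (0:ℝ) ≤ R^i := by positivity
          calc μ i * R^i ≤ (2*d + 3*Mk (i+1)) * R^i := mul_le_mul_of_nonneg_right h hRp
            _ = 2*d*R^i + 3*(Mk (i+1) * R^i) := by ring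
      _ = 2*d*S4s + 3*S2s := by
          rw [Finset.sum_add_distrib, hS4def, hS2def, Finset.mul_sum, Finset.mul_sum]
  -- the real target
  set X := d * R^β with hXdef
  set P := min (radl m φ R τ l s + radl m φ R τ l t + d)
      (Metric.diam (Set.univ : Set T)) * R ^ τ +
      (∑ k ∈ Finset.Ico τ l, radl m φ R k l s * R ^ k +
        ∑ k ∈ Finset.Ico τ l, radl m φ R k l t * R ^ k) with hPdef
  have hX0 : 0 ≤ X := mul_nonneg hd0 (by positivity)
  have hP_le : P ≤ 2*(F+E) + X + 2*S1s := by
    have hT2s : ∑ k ∈ Finset.Ico τ l, radl m φ R k l s * R ^ k ≤ S1s := by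
      rw [hS1def]
      exact Finset.sum_le_sum fun k _ =>
        mul_le_mul_of_nonneg_right (hradlMk s (Or.inl rfl) k) (by positivity)
    have hT2t : ∑ k ∈ Finset.Ico τ l, radl m φ R k l t * R ^ k ≤ S1s := by
      rw [hS1def]
      exact Finset.sum_le_sum fun k _ =>
        mul_le_mul_of_nonneg_right (hradlMk t (Or.inr rfl) k) (by positivity)
    have hmin : min (radl m φ R τ l s + radl m φ R τ l t + d)
        (Metric.diam (Set.univ : Set T)) ≤ 2*Mk τ + d := by
      refine le_trans (min_le_left _ _) ?_
      have h1 := hradlMk s (Or.inl rfl) τ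
      have h2 := hradlMk t (Or.inr rfl) τ
      linarith
    have hT1 : min (radl m φ R τ l s + radl m φ R τ l t + d)
        (Metric.diam (Set.univ : Set T)) * R ^ τ ≤ 2*(F+E) + X := by
      have hmul : min (radl m φ R τ l s + radl m φ R τ l t + d)
          (Metric.diam (Set.univ : Set T)) * R ^ τ ≤ (2*Mk τ + d) * R^τ :=
        mul_le_mul_of_nonneg_right hmin (by positivity)
      have hdRτ : d * R^τ ≤ X := by
        rw [hXdef]
        exact mul_le_mul_of_nonneg_left (pow_le_pow_right₀ hR1.le hτβ) hd0
      have hexp : (2*Mk τ + d) * R^τ = 2*(Mk τ * R^τ) + d * R^τ := by ring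
      rw [hexp] at hmul
      linarith [hS3]
    rw [hPdef]
    linarith
  have hA : (R-2) * P ≤ (4*R-4)*(F+E) + (R-2)*X := by
    nlinarith [mul_le_mul_of_nonneg_left hP_le hp2.le, hS1]
  have hB : (R-1)*(R-5)*F ≤ 2*(R-2)*X + 3*(R-1)*E := by
    have m1 := mul_le_mul_of_nonneg_left hFrec (mul_pos hp1 hp2).le
    have m2 := mul_le_mul_of_nonneg_left hS4 hd0
    have m3 := mul_le_mul_of_nonneg_left hS2 (by linarith : (0:ℝ) ≤ 3*(R-1))
    have m4 := mul_le_mul_of_nonneg_left m2 (by linarith : (0:ℝ) ≤ 2*(R-2))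
    nlinarith [m1, m3, m4]
  have hFinal : (R-1)*(R-2)*(R-5)*P ≤ (R-1)*(R-2)*(R*(R+7))*J := by
    have hB' : (R-1)*(R-5)*F ≤ 2*(R-2)*X + 3*(R-1)*E1 + 3*(R-1)*E2 := by
      rw [← hE12] at hB; linarith
    have hA' : (R-2) * P ≤ (4*R-4)*F + (4*R-4)*E1 + (4*R-4)*E2 + (R-2)*X := by
      rw [← hE12] at hA; linarith
    have m1 := mul_le_mul_of_nonneg_left hA' (mul_pos hp1 hp5).le
    have m2 := mul_le_mul_of_nonneg_left hB' (by linarith : (0:ℝ) ≤ 4*(R-1))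
    have m3 := mul_le_mul_of_nonneg_left hb1 (mul_pos (mul_pos hp3 hp1) hp2).le
    have m4 := mul_le_mul_of_nonneg_left hb2 (by positivity : (0:ℝ) ≤ 4*((R-1)*(R-2)))
    have hslack : 0 ≤ ((R*R-3*R-2)*((R-1)*(R-2))) * E1 := by
      apply mul_nonneg _ hE10
      nlinarith [mul_pos hp5 (by linarith : (0:ℝ) < R+2)]
    linarith [m1, m2, m3, m4, hslack]
  -- polynomial comparison with A
  have hcube : (0:ℝ) < R^3 - 9*R^2 + 44*R - 28 := by
    nlinarith [mul_nonneg hp5.le (by nlinarith [sq_nonneg (R-2)] : (0:ℝ) ≤ R^2 - 4*R + 24)]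
  have hPA : P ≤ (4 * R ^ 3 / ((R - 1) * (R - 2) * (R - 5)) + 3 * R ^ 2 / (2 * (R - 5))) * J := by
    have hden : (0:ℝ) < 2*(R-1)*(R-2)*(R-5) := by positivity
    rw [← sub_nonneg]
    have hkey : (4 * R ^ 3 / ((R - 1) * (R - 2) * (R - 5)) + 3 * R ^ 2 / (2 * (R - 5))) * J - P
        = ((8*R^3 + 3*R^2*(R-1)*(R-2))*J - 2*((R-1)*(R-2)*(R-5)*P)) / (2*(R-1)*(R-2)*(R-5)) := by
      field_simp
      ring
    rw [hkey]
    apply div_nonneg _ hden.le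
    have hpoly : 2*((R-1)*(R-2)*(R*(R+7))) ≤ 8*R^3 + 3*R^2*(R-1)*(R-2) := by
      nlinarith [mul_pos hR0 hcube]
    nlinarith [hFinal, mul_le_mul_of_nonneg_right hpoly hJ0]
  -- conclude in ℝ≥0∞
  have hA0 : (0:ℝ) ≤ 4 * R ^ 3 / ((R - 1) * (R - 2) * (R - 5)) + 3 * R ^ 2 / (2 * (R - 5)) := by
    positivity
  calc ENNReal.ofReal P ≤ ENNReal.ofReal ((4 * R ^ 3 / ((R - 1) * (R - 2) * (R - 5))
        + 3 * R ^ 2 / (2 * (R - 5))) * J) := ENNReal.ofReal_le_ofReal hPA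
    _ = ENNReal.ofReal (4 * R ^ 3 / ((R - 1) * (R - 2) * (R - 5)) + 3 * R ^ 2 / (2 * (R - 5)))
        * ENNReal.ofReal J := ENNReal.ofReal_mul hA0
    _ = _ := by rw [hJdef, ENNReal.ofReal_toReal hτfin]
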